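/- Fix an integer d ≥ 2, an index ι ∈ I = {−d, …, −1, 1, …, d}, k ∈ [−π,π]^d, and a real number z with |z| < 1/(2d−1). Then the generating function of the restricted non-backtracking walk counts satisfies Σ_{n=0}^∞ b̂_n^ι(k) z^n = (1 − z·e^{i k_ι})/(1 + (2d−1)z² − 2dz·D̂(k)). -/

import Mathlib

open scoped BigOperators
open Matrix

noncomputable section

/-- The index set `I = {-d, …, -1, 1, …, d}`. -/
def Idx (d : ℕ) : Finset ℤ := (Finset.Icc (-(d : ℤ)) d).erase 0

lemma mem_Idx {d : ℕ} {ι : ℤ} (h : ι ∈ Idx d) : ι ≠ 0 ∧ -(d : ℤ) ≤ ι ∧ ι ≤ d := by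
  simpa [Idx, Finset.mem_erase, Finset.mem_Icc, and_assoc] using h

lemma mem_Idx' {d : ℕ} {ι : ℤ} (h1 : ι ≠ 0) (h2 : -(d : ℤ) ≤ ι) (h3 : ι ≤ d) :
    ι ∈ Idx d := by
  simp [Idx, Finset.mem_erase, Finset.mem_Icc]; omega

/-- `k_ι = sign(ι) · k_{|ι|}` (with `|ι| ∈ {1,…,d}` re-indexed as `Fin d`). -/
def kc {d : ℕ} (k : Fin d → ℝ) (ι : Idx d) : ℝ :=
  (ι.1.sign : ℝ) * k ⟨ι.1.natAbs - 1, by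
    obtain ⟨h1, h2, h3⟩ := mem_Idx ι.2; omega⟩

/-- The negation `-ι` as an element of the index set. -/
def negIdx {d : ℕ} (ι : Idx d) : Idx d :=
  ⟨-ι.1, by obtain ⟨h1, h2, h3⟩ := mem_Idx ι.2; exact mem_Idx' (by omega) (by omega) (by omega)⟩

/-- The coordinate vector `e⃗_ι ∈ ℂ^I`. -/
def eVec {d : ℕ} (ι : Idx d) : Idx d → ℂ := fun κ => if κ = ι then 1 else 0

/-- The unit step `e_ι = sign(ι)·(basis vector |ι|)` in `ℤ^d`. -/
def stepVec {d : ℕ} (ι : Idx d) : Fin d → ℤ :=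
  fun j => if (j : ℕ) = ι.1.natAbs - 1 then ι.1.sign else 0

/-- The all-ones matrix `C`. -/
def matC (d : ℕ) : Matrix (Idx d) (Idx d) ℂ := Matrix.of fun _ _ => 1

/-- The matrix `J` with `J_{ι,κ} = δ_{ι,-κ}`. -/
def matJ (d : ℕ) : Matrix (Idx d) (Idx d) ℂ :=
  Matrix.of fun ι κ => if ι.1 = -κ.1 then 1 else 0

/-- The diagonal matrix `D[k]` with entries `e^{i k_ι}`. -/
def matD {d : ℕ} (k : Fin d → ℝ) : Matrix (Idx d) (Idx d) ℂ :=
  Matrix.diagonal fun ι => Complex.exp (Complex.I * (kc k ι : ℂ))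

/-- The NBW transition matrix `A[k] = (C − J)·D[−k]`. -/
def matA {d : ℕ} (k : Fin d → ℝ) : Matrix (Idx d) (Idx d) ℂ :=
  (matC d - matJ d) * matD (-k)

/-- `ω` is an `n`-step nearest-neighbour non-backtracking walk on `ℤ^d`. -/
def IsNBW (d n : ℕ) (ω : Fin (n + 1) → (Fin d → ℤ)) : Prop :=
  ω 0 = 0 ∧
  (∀ i : ℕ, ∀ hi : i < n,
    (∑ j, |ω ⟨i + 1, by omega⟩ j - ω ⟨i, by omega⟩ j|) = 1) ∧
  (∀ i : ℕ, ∀ hi : i + 2 ≤ n, ω ⟨i + 2, by omega⟩ ≠ ω ⟨i, by omega⟩)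

/-- `b_n(x)`: the number of `n`-step NBWs ending at `x`. -/
def bc (d n : ℕ) (x : Fin d → ℤ) : ℕ :=
  Nat.card {ω : Fin (n + 1) → (Fin d → ℤ) // IsNBW d n ω ∧ ω (Fin.last n) = x}

/-- `b_n^ι(x)`: the number of `n`-step NBWs ending at `x` whose first step is not `e_ι`. -/
def bcRes (d n : ℕ) (ι : Idx d) (x : Fin d → ℤ) : ℕ :=
  Nat.card {ω : Fin (n + 1) → (Fin d → ℤ) //
    IsNBW d n ω ∧ ω (Fin.last n) = x ∧ ∀ _ : 1 ≤ n, ω ⟨1, by omega⟩ ≠ stepVec ι}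

/-- Fourier transform `f̂(k) = Σ_x f(x) e^{i k·x}` of a (finitely supported) `f : ℤ^d → ℕ`. -/
def fhat {d : ℕ} (f : (Fin d → ℤ) → ℕ) (k : Fin d → ℝ) : ℂ :=
  ∑' x : Fin d → ℤ, (f x : ℂ) * Complex.exp (Complex.I * ∑ j, (k j : ℂ) * (x j : ℂ))

/-- `b̂_n(k)`. -/
def bhat (d n : ℕ) (k : Fin d → ℝ) : ℂ := fhat (bc d n) k

/-- `b⃗_n(k)`, the vector with entries `b̂_n^ι(k)`. -/
def bvec (d n : ℕ) (k : Fin d → ℝ) : Idx d → ℂ := fun ι => fhat (bcRes d n ι) k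

/-- `D̂(k) = (1/d) Σ_j cos k_j`. -/
def Dhat {d : ℕ} (k : Fin d → ℝ) : ℝ := (1 / d) * ∑ j, Real.cos (k j)


open scoped Classical

namespace NBWaux

variable {d : ℕ}

lemma negIdx_negIdx (ι : Idx d) : negIdx (negIdx ι) = ι := by
  simp [negIdx]

lemma kc_negIdx (k : Fin d → ℝ) (ι : Idx d) : kc k (negIdx ι) = - kc k ι := by
  simp only [kc, negIdx, Int.sign_neg, Int.natAbs_neg, Int.cast_neg, neg_mul]

lemma idx_eq_of (ι κ : Idx d) (h1 : ι.1.natAbs = κ.1.natAbs) (h2 : ι.1.sign = κ.1.sign) :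
    ι = κ := by
  apply Subtype.ext
  rw [← Int.sign_mul_natAbs ι.1, ← Int.sign_mul_natAbs κ.1, h1, h2]

lemma sign_natAbs_idx (ι : Idx d) : ι.1.natAbs - 1 < d ∧ 1 ≤ ι.1.natAbs := by
  obtain ⟨h1, h2, h3⟩ := mem_Idx ι.2; omega

lemma abs_sign_idx (ι : Idx d) : |ι.1.sign| = 1 := by
  obtain ⟨h0, _, _⟩ := mem_Idx ι.2
  rcases lt_trichotomy ι.1 0 with h | h | h
  · rw [Int.sign_eq_neg_one_of_neg h]; rfl
  · exact absurd h h0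
  · rw [Int.sign_eq_one_of_pos h]; rfl

lemma stepVec_injective : Function.Injective (stepVec (d := d)) := by
  intro ι κ h
  obtain ⟨hι1, hι2⟩ := sign_natAbs_idx ι
  obtain ⟨hκ1, hκ2⟩ := sign_natAbs_idx κ
  have hs : ι.1.sign ≠ 0 := by
    intro hc; have := abs_sign_idx ι; rw [hc] at this; simp at this
  have h1 : stepVec ι ⟨ι.1.natAbs - 1, hι1⟩ = stepVec κ ⟨ι.1.natAbs - 1, hι1⟩ := by rw [h]
  simp only [stepVec, if_pos rfl] at h1
  by_cases hab : ι.1.natAbs - 1 = κ.1.natAbs - 1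
  · rw [if_pos hab] at h1
    exact idx_eq_of ι κ (by omega) h1
  · rw [if_neg hab] at h1; exact absurd h1 hs

lemma stepVec_negIdx (ι : Idx d) : stepVec (negIdx ι) = - stepVec ι := by
  funext j
  simp only [stepVec, negIdx, Int.sign_neg, Int.natAbs_neg, Pi.neg_apply]
  split <;> simp

lemma l1_stepVec (ι : Idx d) : (∑ j, |stepVec ι j|) = 1 := by
  obtain ⟨hι1, hι2⟩ := sign_natAbs_idx ι
  rw [Finset.sum_eq_single (⟨ι.1.natAbs - 1, hι1⟩ : Fin d)]
  · simp only [stepVec, if_pos rfl]; exact abs_sign_idx ι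
  · intro j _ hj
    simp only [stepVec]
    rw [if_neg (by simpa [Fin.ext_iff] using hj), abs_zero]
  · intro h; exact absurd (Finset.mem_univ _) h

lemma stepVec_add_eq_zero_iff (ι κ : Idx d) :
    stepVec ι + stepVec κ = 0 ↔ κ = negIdx ι := by
  constructor
  · intro h
    apply stepVec_injective
    rw [stepVec_negIdx]
    funext j
    have := congrFun h j
    simp only [Pi.add_apply, Pi.zero_apply] at this
    simp only [Pi.neg_apply]; omega
  · intro h; rw [h, stepVec_negIdx]; funext j; simp

lemma exists_step (v : Fin d → ℤ) (hv : (∑ j, |v j|) = 1) :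
    ∃ κ : Idx d, stepVec κ = v := by
  have hne : ∃ j0 : Fin d, v j0 ≠ 0 := by
    by_contra hc
    push_neg at hc
    rw [Finset.sum_eq_zero (fun j _ => by rw [hc j, abs_zero])] at hv
    exact one_ne_zero hv.symm
  obtain ⟨j0, hj0⟩ := hne
  have hrest : ∀ j : Fin d, j ≠ j0 → v j = 0 := by
    intro j hj
    have h1 : |v j0| + |v j| ≤ ∑ i, |v i| := by
      have : ({j0, j} : Finset (Fin d)) ⊆ Finset.univ := Finset.subset_univ _
      calc |v j0| + |v j| = ∑ i ∈ ({j0, j} : Finset (Fin d)), |v i| := by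
            rw [Finset.sum_pair (Ne.symm hj)]
        _ ≤ ∑ i, |v i| := Finset.sum_le_sum_of_subset_of_nonneg this
            (fun i _ _ => abs_nonneg _)
    have h2 : 1 ≤ |v j0| := Int.one_le_abs hj0
    have h3 := abs_nonneg (v j)
    rw [hv] at h1
    have : |v j| = 0 := by omega
    exact abs_eq_zero.mp this
  have hv0 : |v j0| = 1 := by
    rw [Finset.sum_eq_single j0 (fun j _ hj => by rw [hrest j hj, abs_zero])
      (fun h => absurd (Finset.mem_univ _) h)] at hv
    exact hv
  refine ⟨⟨v j0 * ((j0 : ℕ) + 1), ?_⟩, ?_⟩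
  · have hd' : (j0 : ℕ) < d := j0.2
    apply mem_Idx' <;> rcases abs_eq (by norm_num : (0:ℤ) ≤ 1) |>.mp hv0 with h | h <;>
      rw [h] <;> push_cast <;> omega
  · funext j
    have hsign : (v j0 * ((j0 : ℕ) + 1)).sign = v j0 := by
      rcases abs_eq (by norm_num : (0:ℤ) ≤ 1) |>.mp hv0 with h | h <;> rw [h] <;>
        [exact Int.sign_eq_one_of_pos (by positivity);
         exact Int.sign_eq_neg_one_of_neg (by omega)]
    have hnat : (v j0 * ((j0 : ℕ) + 1)).natAbs = (j0 : ℕ) + 1 := by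
      rcases abs_eq (by norm_num : (0:ℤ) ≤ 1) |>.mp hv0 with h | h <;> rw [h] <;> omega
    simp only [stepVec, hsign, hnat, Nat.add_sub_cancel]
    by_cases hj : (j : ℕ) = (j0 : ℕ)
    · rw [if_pos hj, Fin.ext hj]
    · rw [if_neg hj, hrest j (fun hc => hj (by rw [hc]))]

end NBWaux
namespace NBWaux

def Gpred {d : ℕ} : ∀ n : ℕ, Idx d → (Fin n → Idx d) → Prop
  | 0, _, _ => True
  | n+1, ι, s => s 0 ≠ ι ∧ Gpred n (negIdx (s 0)) (Fin.tail s)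

lemma gpred_iff {d : ℕ} : ∀ (n : ℕ) (ι : Idx d) (s : Fin n → Idx d),
    Gpred n ι s ↔ ((∀ h : 0 < n, s ⟨0, h⟩ ≠ ι) ∧
      (∀ i : ℕ, ∀ h : i + 1 < n, s ⟨i + 1, h⟩ ≠ negIdx (s ⟨i, by omega⟩)))
  | 0, ι, s => by
      simp only [Gpred]
      constructor
      · intro _; exact ⟨fun h => absurd h (by omega), fun i h => absurd h (by omega)⟩
      · intro _; trivial
  | n+1, ι, s => by
      rw [Gpred, gpred_iff n]
      have htail : ∀ (i : ℕ) (h : i < n), Fin.tail s ⟨i, h⟩ = s ⟨i + 1, by omega⟩ := by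
        intro i h; rfl
      constructor
      · rintro ⟨h0, h1, h2⟩
        refine ⟨fun _ => h0, ?_⟩
        intro i hi
        match i with
        | 0 =>
            have := h1 (by omega)
            rwa [htail 0 (by omega)] at this
        | j+1 =>
            have := h2 j (by omega)
            rwa [htail (j+1) (by omega), htail j (by omega)] at this
      · rintro ⟨h0, h12⟩
        refine ⟨h0 (by omega), ?_, ?_⟩
        · intro h
          rw [htail 0 h]
          exact h12 0 (by omega)
        · intro i hi
          rw [htail (i+1) (by omega), htail i (by omega)]
          exact h12 (i+1) (by omega)

/-- Partial-sum map from step sequences to walks. -/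
def Phi {d n : ℕ} (s : Fin n → Idx d) (i : Fin (n + 1)) : Fin d → ℤ :=
  ∑ t : Fin n, if (t : ℕ) < (i : ℕ) then stepVec (s t) else 0

lemma Phi_zero {d n : ℕ} (s : Fin n → Idx d) (i : Fin (n + 1)) (hi : (i : ℕ) = 0) :
    Phi s i = 0 := by
  simp [Phi, hi]

lemma Phi_succ {d n : ℕ} (s : Fin n → Idx d) (i : ℕ) (hi : i < n) :
    Phi s ⟨i + 1, by omega⟩ = Phi s ⟨i, by omega⟩ + stepVec (s ⟨i, hi⟩) := by
  have key : ∀ t : Fin n, (if (t:ℕ) < i + 1 then stepVec (s t) else 0) =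
      (if (t:ℕ) < i then stepVec (s t) else 0)
        + (if t = ⟨i, hi⟩ then stepVec (s t) else 0) := by
    intro t
    rcases lt_trichotomy (t:ℕ) i with h|h|h
    · rw [if_pos (by omega), if_pos h, if_neg (by simp [Fin.ext_iff]; omega), add_zero]
    · rw [if_pos (by omega), if_neg (by omega), if_pos (by simp [Fin.ext_iff, h]), zero_add]
    · rw [if_neg (by omega), if_neg (by omega), if_neg (by simp [Fin.ext_iff]; omega), add_zero]
  show (∑ t : Fin n, if (t:ℕ) < i + 1 then stepVec (s t) else 0) =
    (∑ t : Fin n, if (t:ℕ) < i then stepVec (s t) else 0) + stepVec (s ⟨i, hi⟩)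
  rw [Finset.sum_congr rfl (fun t _ => key t), Finset.sum_add_distrib,
    Finset.sum_ite_eq' Finset.univ (⟨i, hi⟩ : Fin n) (fun t => stepVec (s t)),
    if_pos (Finset.mem_univ _)]

lemma Phi_last {d n : ℕ} (s : Fin n → Idx d) :
    Phi s (Fin.last n) = ∑ t : Fin n, stepVec (s t) := by
  unfold Phi
  apply Finset.sum_congr rfl
  intro t _
  rw [if_pos (show (t:ℕ) < (Fin.last n : ℕ) from by simp [Fin.val_last, t.2])]

end NBWaux
namespace NBWaux

variable {d : ℕ}

lemma phi_isNBW {n : ℕ} {ι : Idx d} {x : Fin d → ℤ} (s : Fin n → Idx d)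
    (hG : Gpred n ι s) (hx : (∑ t : Fin n, stepVec (s t)) = x) :
    IsNBW d n (Phi s) ∧ Phi s (Fin.last n) = x ∧
      ∀ _ : 1 ≤ n, Phi s ⟨1, by omega⟩ ≠ stepVec ι := by
  rw [gpred_iff] at hG
  obtain ⟨hG0, hG1⟩ := hG
  refine ⟨⟨Phi_zero s 0 rfl, ?_, ?_⟩, ?_, ?_⟩
  · intro i hi
    rw [Phi_succ s i hi]
    simp only [Pi.add_apply, add_sub_cancel_left]
    exact l1_stepVec _
  · intro i hi h
    have e2 : Phi s ⟨i + 2, by omega⟩ = Phi s ⟨i, by omega⟩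
        + (stepVec (s ⟨i, by omega⟩) + stepVec (s ⟨i + 1, by omega⟩)) := by
      rw [show (⟨i + 2, by omega⟩ : Fin (n+1)) = ⟨(i+1) + 1, by omega⟩ from rfl,
        Phi_succ s (i+1) (by omega), Phi_succ s i (by omega)]
      abel
    rw [e2, add_eq_left] at h
    exact hG1 i (by omega) ((stepVec_add_eq_zero_iff _ _).mp h)
  · rw [Phi_last]; exact hx
  · intro hn h
    have e1 : Phi s ⟨1, by omega⟩ = stepVec (s ⟨0, by omega⟩) := by
      rw [show (⟨1, by omega⟩ : Fin (n+1)) = ⟨0 + 1, by omega⟩ from rfl,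
        Phi_succ s 0 (by omega), Phi_zero s _ rfl, zero_add]
    rw [e1] at h
    exact hG0 (by omega) (stepVec_injective h)

lemma phi_injective {n : ℕ} (s s' : Fin n → Idx d) (h : Phi s = Phi s') : s = s' := by
  funext i
  apply stepVec_injective
  have h1 := Phi_succ s i.1 i.2
  have h2 := Phi_succ s' i.1 i.2
  rw [h] at h1
  have := h1.symm.trans h2
  rw [add_right_inj] at this
  simpa [Fin.eta] using this

lemma phi_surjective {n : ℕ} {ι : Idx d} {x : Fin d → ℤ}
    (ω : Fin (n+1) → Fin d → ℤ) (hw : IsNBW d n ω) (hlast : ω (Fin.last n) = x)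
    (hfirst : ∀ _ : 1 ≤ n, ω ⟨1, by omega⟩ ≠ stepVec ι) :
    ∃ s : Fin n → Idx d, Gpred n ι s ∧ (∑ t : Fin n, stepVec (s t)) = x ∧ Phi s = ω := by
  obtain ⟨h0, hstep, hnb⟩ := hw
  have hv : ∀ i : ℕ, ∀ hi : i < n, ∃ κ : Idx d,
      stepVec κ = fun j => ω ⟨i + 1, by omega⟩ j - ω ⟨i, by omega⟩ j := by
    intro i hi
    exact exists_step _ (hstep i hi)
  choose f hf using hv
  have key : ∀ m : ℕ, ∀ hm : m ≤ n, Phi (fun i : Fin n => f i.1 i.2) ⟨m, by omega⟩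
      = ω ⟨m, by omega⟩ := by
    intro m
    induction m with
    | zero =>
        intro _
        have hz : (⟨0, by omega⟩ : Fin (n+1)) = 0 := by ext; simp
        rw [Phi_zero _ _ rfl, hz, h0]
    | succ m ih =>
        intro hm
        rw [Phi_succ _ m (by omega), ih (by omega)]
        funext j
        simp only [Pi.add_apply, hf m (by omega)]
        ring
  have hphi : Phi (fun i : Fin n => f i.1 i.2) = ω := by
    funext i
    have := key i.1 (Nat.lt_succ_iff.mp i.2)
    simpa [Fin.eta] using this
  have hG : Gpred n ι (fun i : Fin n => f i.1 i.2) := by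
    rw [gpred_iff]
    constructor
    · intro h hc
      replace hc : f 0 h = ι := hc
      apply hfirst (by omega)
      have h1 := hf 0 h
      rw [hc] at h1
      rw [h1]
      funext j
      have h00 : ω ⟨0, by omega⟩ = 0 := by
        have hz : (⟨0, by omega⟩ : Fin (n+1)) = 0 := by ext; simp
        rw [hz, h0]
      rw [h00]
      simp
    · intro i hi hc
      replace hc : f (i+1) (by omega) = negIdx (f i (by omega)) := hc
      apply hnb i (by omega)
      have h1 := hf i (by omega)
      have h2 := hf (i+1) (by omega)
      rw [hc, stepVec_negIdx, h1] at h2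
      rw [show (⟨i+2, by omega⟩ : Fin (n+1)) = ⟨i+1+1, by omega⟩ from rfl]
      funext j
      have h3 := congrFun h2 j
      simp only [Pi.neg_apply] at h3
      omega
  refine ⟨fun i : Fin n => f i.1 i.2, hG, ?_, hphi⟩
  rw [← Phi_last, hphi, hlast]

/-- The cardinality bridge. -/
lemma bcRes_eq_card (n : ℕ) (ι : Idx d) (x : Fin d → ℤ) :
    bcRes d n ι x =
      Nat.card {s : Fin n → Idx d // Gpred n ι s ∧ (∑ t : Fin n, stepVec (s t)) = x} := by
  unfold bcRes
  symm
  apply Nat.card_eq_of_bijective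
    (f := fun s => ⟨Phi s.1, (phi_isNBW s.1 s.2.1 s.2.2).1, (phi_isNBW s.1 s.2.1 s.2.2).2.1,
      (phi_isNBW s.1 s.2.1 s.2.2).2.2⟩)
  constructor
  · rintro ⟨s, hs⟩ ⟨s', hs'⟩ h
    simp only [Subtype.mk.injEq] at h ⊢
    exact phi_injective s s' h
  · rintro ⟨ω, hw, hlast, hfirst⟩
    obtain ⟨s, h1, h2, h3⟩ := phi_surjective ω hw hlast hfirst
    exact ⟨⟨s, h1, h2⟩, Subtype.ext h3⟩

end NBWaux
namespace NBWaux

variable {d : ℕ}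

/-- `c_κ = e^{i k_κ}`. -/
def cF (k : Fin d → ℝ) (κ : Idx d) : ℂ := Complex.exp (Complex.I * (kc k κ : ℂ))

/-- `u_n(ι) = Σ_{admissible step sequences} Π c_{s_t}`. -/
def uS (k : Fin d → ℝ) (n : ℕ) (ι : Idx d) : ℂ :=
  ∑ s : Fin n → Idx d, if Gpred n ι s then ∏ t, cF k (s t) else 0

lemma sum_k_stepVec (k : Fin d → ℝ) (κ : Idx d) :
    (∑ j, (k j : ℂ) * ((stepVec κ j : ℤ) : ℂ)) = (kc k κ : ℂ) := by
  obtain ⟨h1, h2⟩ := sign_natAbs_idx κ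
  rw [Finset.sum_eq_single (⟨κ.1.natAbs - 1, h1⟩ : Fin d)]
  · simp only [stepVec, if_pos rfl, kc]
    push_cast
    ring
  · intro j _ hj
    simp only [stepVec]
    rw [if_neg (by simpa [Fin.ext_iff] using hj)]
    simp
  · intro h; exact absurd (Finset.mem_univ _) h

lemma exp_endpoint (k : Fin d → ℝ) {n : ℕ} (s : Fin n → Idx d) :
    Complex.exp (Complex.I * ∑ j, (k j : ℂ) * (((∑ t : Fin n, stepVec (s t)) j : ℤ) : ℂ))
      = ∏ t, cF k (s t) := by
  have h1 : (∑ j, (k j : ℂ) * (((∑ t : Fin n, stepVec (s t)) j : ℤ) : ℂ))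
      = ∑ t : Fin n, (kc k (s t) : ℂ) := by
    have : ∀ j : Fin d, (((∑ t : Fin n, stepVec (s t)) j : ℤ) : ℂ)
        = ∑ t : Fin n, ((stepVec (s t) j : ℤ) : ℂ) := by
      intro j
      rw [Finset.sum_apply]
      push_cast
      rfl
    rw [Finset.sum_congr rfl (fun j _ => by rw [this j, Finset.mul_sum]),
      Finset.sum_comm]
    exact Finset.sum_congr rfl (fun t _ => sum_k_stepVec k (s t))
  rw [h1, Finset.mul_sum, Complex.exp_sum]
  rfl

lemma bvec_eq_uS (k : Fin d → ℝ) (n : ℕ) (ι : Idx d) :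
    bvec d n k ι = uS k n ι := by
  classical
  unfold bvec fhat
  set E : (Fin n → Idx d) → (Fin d → ℤ) := fun s => ∑ t : Fin n, stepVec (s t) with hE
  set T : Finset (Fin n → Idx d) := Finset.univ.filter (Gpred n ι) with hT
  have hcard : ∀ x, (bcRes d n ι x : ℂ) = ((T.filter (fun s => E s = x)).card : ℂ) := by
    intro x
    rw [bcRes_eq_card n ι x, Nat.card_eq_fintype_card, Fintype.card_subtype, hT,
      Finset.filter_filter]
  have hsupp : ∀ x ∉ T.image E,
      (bcRes d n ι x : ℂ) * Complex.exp (Complex.I * ∑ j, (k j : ℂ) * ((x j : ℤ) : ℂ)) = 0 := by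
    intro x hx
    rw [hcard x]
    have : T.filter (fun s => E s = x) = ∅ := by
      rw [Finset.filter_eq_empty_iff]
      intro s hs hc
      exact hx (Finset.mem_image.mpr ⟨s, hs, hc⟩)
    rw [this]
    simp
  rw [tsum_eq_sum hsupp]
  rw [Finset.sum_congr rfl (fun x _ => by rw [hcard x])]
  have := Finset.sum_comp (s := T)
    (g := E) (f := fun x => Complex.exp (Complex.I * ∑ j, (k j : ℂ) * ((x j : ℤ) : ℂ)))
  rw [Finset.sum_congr rfl (fun x _ => by rw [← nsmul_eq_mul]), ← this]
  rw [Finset.sum_congr rfl (fun s _ => exp_endpoint k s), hT, Finset.sum_filter]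
  rfl

end NBWaux
namespace NBWaux

variable {d : ℕ}

lemma uS_zero (k : Fin d → ℝ) (ι : Idx d) : uS k 0 ι = 1 := by
  rw [uS]
  rw [Finset.sum_eq_single (Fin.elim0 : Fin 0 → Idx d)]
  · simp [Gpred]
  · intro s _ hs
    exact absurd (funext fun i => i.elim0) hs
  · intro h; exact absurd (Finset.mem_univ _) h

lemma uS_succ (k : Fin d → ℝ) (n : ℕ) (ι : Idx d) :
    uS k (n+1) ι = ∑ κ : Idx d, if κ = ι then 0 else cF k κ * uS k n (negIdx κ) := by
  classical
  rw [uS, ← Equiv.sum_comp (Fin.consEquiv fun _ : Fin (n+1) => (Idx d : Type)),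
    Fintype.sum_prod_type]
  apply Finset.sum_congr rfl
  intro κ _
  have hce : ∀ t : Fin n → Idx d, ((Fin.consEquiv fun _ : Fin (n+1) => (Idx d : Type))) (κ, t)
      = (Fin.cons κ t : ∀ _ : Fin (n+1), (Idx d : Type)) := fun _ => rfl
  simp only [hce]
  have hg : ∀ t : Fin n → Idx d, Gpred (n+1) ι
        ((Fin.cons κ t : ∀ _ : Fin (n+1), (Idx d : Type))) ↔
      (κ ≠ ι ∧ Gpred n (negIdx κ) t) := by
    intro t
    simp only [Gpred, Fin.cons_zero, Fin.tail_cons]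
  have hp : ∀ t : Fin n → Idx d,
      (∏ i : Fin (n+1), cF k ((Fin.cons κ t : ∀ _ : Fin (n+1), (Idx d : Type)) i))
        = cF k κ * ∏ i : Fin n, cF k (t i) := by
    intro t
    rw [Fin.prod_univ_succ]
    simp [Fin.cons_zero, Fin.cons_succ]
  by_cases hκ : κ = ι
  · rw [if_pos hκ]
    apply Finset.sum_eq_zero
    intro t _
    rw [if_neg (by rw [hg]; exact fun hc => hc.1 hκ)]
  · rw [if_neg hκ, uS, Finset.mul_sum]
    apply Finset.sum_congr rfl
    intro t _
    simp only [hg, hp, hκ, ne_eq, not_false_iff, true_and, mul_ite, mul_zero]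

lemma cF_mul_neg (k : Fin d → ℝ) (κ : Idx d) : cF k κ * cF k (negIdx κ) = 1 := by
  rw [cF, cF, ← Complex.exp_add, kc_negIdx]
  push_cast
  ring_nf
  exact Complex.exp_zero

lemma card_Idx : Fintype.card (Idx d : Type) = 2 * d := by
  rw [Fintype.card_coe, Idx, Finset.card_erase_of_mem (by simp [Finset.mem_Icc]),
    Int.card_Icc]
  omega

/-- `σ = Σ_κ c_κ`. -/
def sigC (k : Fin d → ℝ) : ℂ := ∑ κ : Idx d, cF k κ

/-- the pair sequence `(p_n, q_n)`. -/
def pq (k : Fin d → ℝ) (r : ℂ) : ℕ → ℂ × ℂ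
  | 0 => (1, 0)
  | n+1 => (sigC k * (pq k r n).1 + r * (pq k r n).2, -(pq k r n).1)

lemma sum_ite_eq_sub {α : Type*} [Fintype α] [DecidableEq α] (f : α → ℂ) (ι : α) :
    (∑ κ : α, if κ = ι then 0 else f κ) = (∑ κ : α, f κ) - f ι := by
  have : ∀ κ : α, (if κ = ι then 0 else f κ) = f κ - (if κ = ι then f κ else 0) := by
    intro κ; by_cases h : κ = ι <;> simp [h]
  rw [Finset.sum_congr rfl (fun κ _ => this κ), Finset.sum_sub_distrib,
    Finset.sum_ite_eq' Finset.univ ι f, if_pos (Finset.mem_univ _)]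

lemma uS_form (k : Fin d → ℝ) (n : ℕ) (ι : Idx d) :
    uS k n ι = (pq k (2*d-1) n).1 + (pq k (2*d-1) n).2 * cF k ι := by
  induction n generalizing ι with
  | zero => rw [uS_zero, show pq k (2*(d:ℂ)-1) 0 = (1, 0) from rfl]; simp
  | succ n ih =>
      rw [uS_succ]
      rw [Finset.sum_congr rfl (fun κ _ => by
        rw [show (if κ = ι then 0 else cF k κ * uS k n (negIdx κ))
            = (if κ = ι then 0 else ((pq k (2*d-1) n).1 * cF k κ + (pq k (2*d-1) n).2)) from by
          by_cases h : κ = ι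
          · simp [h]
          · rw [if_neg h, if_neg h, ih (negIdx κ)]
            calc cF k κ * ((pq k (2*(d:ℂ)-1) n).1 + (pq k (2*(d:ℂ)-1) n).2 * cF k (negIdx κ))
                = (pq k (2*(d:ℂ)-1) n).1 * cF k κ
                  + (pq k (2*(d:ℂ)-1) n).2 * (cF k κ * cF k (negIdx κ)) := by ring
              _ = _ := by rw [cF_mul_neg k κ, mul_one]])]
      rw [sum_ite_eq_sub (fun κ => (pq k (2*d-1) n).1 * cF k κ + (pq k (2*d-1) n).2) ι]
      rw [Finset.sum_add_distrib, ← Finset.mul_sum, ← sigC, Finset.sum_const,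
        Finset.card_univ, card_Idx]
      show _ = (pq k (2*d-1) (n+1)).1 + (pq k (2*d-1) (n+1)).2 * cF k ι
      rw [pq]
      push_cast
      ring
  
end NBWaux
namespace NBWaux

variable {d : ℕ}

lemma uS_one (k : Fin d → ℝ) (ι : Idx d) : uS k 1 ι = sigC k - cF k ι := by
  rw [uS_form, show pq k (2*(d:ℂ)-1) 1 = (sigC k * 1 + (2*(d:ℂ)-1) * 0, -(1:ℂ)) from rfl]
  ring

lemma uS_rec (k : Fin d → ℝ) (n : ℕ) (ι : Idx d) :
    uS k (n+2) ι = sigC k * uS k (n+1) ι - (2*(d:ℂ)-1) * uS k n ι := by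
  have h1 : pq k (2*(d:ℂ)-1) (n+2) = (sigC k * (pq k (2*(d:ℂ)-1) (n+1)).1
      + (2*(d:ℂ)-1) * (pq k (2*(d:ℂ)-1) (n+1)).2, -(pq k (2*(d:ℂ)-1) (n+1)).1) := rfl
  have h2 : pq k (2*(d:ℂ)-1) (n+1) = (sigC k * (pq k (2*(d:ℂ)-1) n).1
      + (2*(d:ℂ)-1) * (pq k (2*(d:ℂ)-1) n).2, -(pq k (2*(d:ℂ)-1) n).1) := rfl
  rw [uS_form, uS_form, uS_form, h1, h2]
  ring

lemma norm_cF (k : Fin d → ℝ) (κ : Idx d) : ‖cF k κ‖ = 1 := by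
  rw [cF, mul_comm]
  exact Complex.norm_exp_ofReal_mul_I _

lemma sum_ite_eq_sub' {α β : Type*} [Fintype α] [DecidableEq α] [AddCommGroup β]
    (f : α → β) (ι : α) :
    (∑ κ : α, if κ = ι then 0 else f κ) = (∑ κ : α, f κ) - f ι := by
  have : ∀ κ : α, (if κ = ι then 0 else f κ) = f κ - (if κ = ι then f κ else 0) := by
    intro κ; by_cases h : κ = ι <;> simp [h]
  rw [Finset.sum_congr rfl (fun κ _ => this κ), Finset.sum_sub_distrib,
    Finset.sum_ite_eq' Finset.univ ι f, if_pos (Finset.mem_univ _)]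

lemma uS_bound (hd : 1 ≤ d) (k : Fin d → ℝ) :
    ∀ n : ℕ, ∀ ι : Idx d, ‖uS k n ι‖ ≤ (2*(d:ℝ)-1)^n := by
  intro n
  induction n with
  | zero => intro ι; rw [uS_zero]; simp
  | succ n ih =>
      intro ι
      rw [uS_succ]
      calc ‖∑ κ : Idx d, if κ = ι then 0 else cF k κ * uS k n (negIdx κ)‖
          ≤ ∑ κ : Idx d, ‖if κ = ι then 0 else cF k κ * uS k n (negIdx κ)‖ :=
            norm_sum_le _ _
        _ ≤ ∑ κ : Idx d, (if κ = ι then 0 else (2*(d:ℝ)-1)^n) := by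
            apply Finset.sum_le_sum
            intro κ _
            by_cases h : κ = ι
            · simp [h]
            · rw [if_neg h, if_neg h, norm_mul, norm_cF, one_mul]
              exact ih (negIdx κ)
        _ = (2*(d:ℝ)) * (2*(d:ℝ)-1)^n - (2*(d:ℝ)-1)^n := by
            rw [sum_ite_eq_sub' (fun _ => (2*(d:ℝ)-1)^n) ι, Finset.sum_const,
              Finset.card_univ, card_Idx, nsmul_eq_mul]
            push_cast
            ring
        _ = (2*(d:ℝ)-1)^(n+1) := by ring

/-- the positive coordinate direction. -/
def posIdx (j : Fin d) : Idx d :=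
  ⟨((j : ℕ) : ℤ) + 1, mem_Idx' (by omega) (by omega) (by have := j.2; omega)⟩

lemma kc_posIdx (k : Fin d → ℝ) (j : Fin d) : kc k (posIdx j) = k j := by
  have h1 : (((j : ℕ) : ℤ) + 1).sign = 1 := Int.sign_eq_one_of_pos (by omega)
  have h2 : (((j : ℕ) : ℤ) + 1).natAbs = (j : ℕ) + 1 := by omega
  simp only [kc, posIdx, h1, h2, Nat.add_sub_cancel, Int.cast_one, one_mul]

lemma sigC_eq (hd : 1 ≤ d) (k : Fin d → ℝ) : sigC k = 2*(d:ℂ)*((Dhat k : ℝ) : ℂ) := by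
  classical
  have hbij : Function.Bijective (fun p : Fin d × Bool =>
      if p.2 then posIdx p.1 else negIdx (posIdx p.1)) := by
    rw [Fintype.bijective_iff_injective_and_card]
    constructor
    · rintro ⟨j, b⟩ ⟨j', b'⟩ h
      have hv := congrArg (fun κ : Idx d => κ.1) h
      rcases b <;> rcases b' <;>
          dsimp only at hv <;>
          simp only [posIdx, negIdx, if_true, if_false, Bool.false_eq_true, ite_true,
            ite_false] at hv
      · exact Prod.ext (show j = j' from Fin.ext (by omega)) rfl
      · exact absurd hv (by omega)
      · exact absurd hv (by omega)
      · exact Prod.ext (show j = j' from Fin.ext (by omega)) rfl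
    · rw [card_Idx, Fintype.card_prod, Fintype.card_bool, Fintype.card_fin]
      ring
  have := Fintype.sum_bijective _ hbij
    (fun p : Fin d × Bool => cF k (if p.2 then posIdx p.1 else negIdx (posIdx p.1)))
    (cF k) (fun p => rfl)
  rw [sigC, ← this, Fintype.sum_prod_type]
  have hterm : ∀ j : Fin d,
      (∑ b : Bool, cF k (if b then posIdx j else negIdx (posIdx j)))
        = 2 * Complex.cos ((k j : ℝ) : ℂ) := by
    intro j
    rw [Fintype.sum_bool]
    simp only [cF, Bool.false_eq_true, if_true, if_false, ite_true, ite_false]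
    rw [kc_negIdx, kc_posIdx]
    rw [Complex.cos]
    push_cast
    rw [show Complex.I * ((k j : ℝ) : ℂ) = ((k j : ℝ) : ℂ) * Complex.I from mul_comm _ _,
      show Complex.I * (-((k j : ℝ) : ℂ)) = -(((k j : ℝ) : ℂ) * Complex.I) from by ring]
    ring
  rw [Finset.sum_congr rfl (fun j _ => hterm j), ← Finset.mul_sum, Dhat]
  push_cast
  have hdne : (d : ℂ) ≠ 0 := by
    simp only [ne_eq, Nat.cast_eq_zero]; omega
  field_simp

end NBWaux

set_option maxHeartbeats 1000000 in
open NBWaux in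
/-- for `ι ∈ I` and `|z| < 1/(2d−1)`,
`Σ_n b̂_n^ι(k) zⁿ = (1 − z·e^{ik_ι})/(1+(2d−1)z²−2dz·D̂(k))`. -/
theorem nbw_restricted_green_function (d : ℕ) (hd : 2 ≤ d) (ι : Idx d) (k : Fin d → ℝ)
    (hk : ∀ j, k j ∈ Set.Icc (-Real.pi) Real.pi) (z : ℝ)
    (hz : |z| < 1 / (2 * d - 1)) :
    HasSum (fun n : ℕ => bvec d n k ι * (z : ℂ) ^ n)
      ((1 - (z : ℂ) * Complex.exp (Complex.I * (kc k ι : ℂ))) /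
        (1 + (2 * (d : ℂ) - 1) * (z : ℂ) ^ 2 - 2 * d * (z : ℂ) * (Dhat k : ℂ))) := by
  have hd1 : 1 ≤ d := by omega
  have hdR : (2:ℝ) ≤ (d:ℝ) := by exact_mod_cast hd
  set r : ℝ := 2*(d:ℝ) - 1 with hrdef
  have hr3 : (3:ℝ) ≤ r := by rw [hrdef]; linarith
  have hr0 : (0:ℝ) < r := by linarith
  have hz' : |z| * r < 1 := by
    rw [← lt_div_iff₀ hr0]
    exact hz
  -- summability
  have hnorm : ∀ n : ℕ, ‖uS k n ι * (z:ℂ)^n‖ ≤ (|z| * r)^n := by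
    intro n
    rw [norm_mul, norm_pow, Complex.norm_real, Real.norm_eq_abs, mul_pow, mul_comm (|z|^n)]
    exact mul_le_mul_of_nonneg_right (uS_bound hd1 k n ι) (pow_nonneg (abs_nonneg z) n)
  have hsum : Summable (fun n : ℕ => uS k n ι * (z:ℂ)^n) :=
    Summable.of_norm_bounded (summable_geometric_of_lt_one
      (mul_nonneg (abs_nonneg z) (le_of_lt hr0)) hz') hnorm
  have key : (fun n : ℕ => bvec d n k ι * (z:ℂ)^n) = (fun n => uS k n ι * (z:ℂ)^n) :=
    funext (fun n => by rw [bvec_eq_uS])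
  rw [key]
  set F := ∑' n : ℕ, uS k n ι * (z:ℂ)^n with hFdef
  have hF : HasSum (fun n : ℕ => uS k n ι * (z:ℂ)^n) F := hsum.hasSum
  -- the linear equation for F
  have hs1 : Summable (fun n : ℕ => uS k (n+1) ι * (z:ℂ)^(n+1)) :=
    (summable_nat_add_iff 1).mpr hsum
  set A := ∑' n : ℕ, uS k (n+1) ι * (z:ℂ)^(n+1) with hAdef
  have e0 : F = uS k 0 ι * (z:ℂ)^0 + A := hsum.tsum_eq_zero_add
  have e1 : A = uS k 1 ι * (z:ℂ)^1
      + ∑' n : ℕ, uS k (n+2) ι * (z:ℂ)^(n+2) := hs1.tsum_eq_zero_add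
  have e2 : (∑' n : ℕ, uS k (n+2) ι * (z:ℂ)^(n+2))
      = sigC k * (z:ℂ) * A - (2*(d:ℂ)-1) * (z:ℂ)^2 * F := by
    rw [hAdef, hFdef, ← tsum_mul_left, ← tsum_mul_left,
      ← Summable.tsum_sub (hs1.mul_left _) (hsum.mul_left _)]
    apply tsum_congr
    intro n
    rw [uS_rec]
    ring
  rw [uS_zero, pow_zero, mul_one] at e0
  rw [uS_one, pow_one, e2] at e1
  -- denominators
  set c : ℂ := Complex.exp (Complex.I * ((kc k ι : ℝ) : ℂ)) with hcdef
  have hcF : cF k ι = c := rfl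
  set D : ℂ := 1 + (2 * (d : ℂ) - 1) * (z : ℂ) ^ 2 - 2 * d * (z : ℂ) * (Dhat k : ℂ)
    with hDdef
  have habs : |Dhat k| ≤ 1 := by
    rw [Dhat, abs_mul, abs_of_nonneg (by positivity : (0:ℝ) ≤ 1/(d:ℝ))]
    have h1 : |∑ j, Real.cos (k j)| ≤ (d:ℝ) := by
      calc |∑ j, Real.cos (k j)| ≤ ∑ j, |Real.cos (k j)| := Finset.abs_sum_le_sum_abs _ _
        _ ≤ ∑ _j : Fin d, (1:ℝ) := Finset.sum_le_sum (fun j _ => Real.abs_cos_le_one _)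
        _ = d := by simp
    calc (1/(d:ℝ)) * |∑ j, Real.cos (k j)| ≤ (1/(d:ℝ)) * d := by
          exact mul_le_mul_of_nonneg_left h1 (by positivity)
      _ = 1 := by field_simp
  have hzD : z * Dhat k ≤ |z| := by
    calc z * Dhat k ≤ |z * Dhat k| := le_abs_self _
      _ = |z| * |Dhat k| := abs_mul _ _
      _ ≤ |z| * 1 := mul_le_mul_of_nonneg_left habs (abs_nonneg z)
      _ = |z| := mul_one _
  have hDpos : (0:ℝ) < 1 + (2*(d:ℝ)-1)*z^2 - 2*(d:ℝ)*z*(Dhat k) := by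
    have hT : (0:ℝ) < (1 - |z|) * (1 - r*|z|) := by
      apply mul_pos
      · nlinarith [abs_nonneg z]
      · nlinarith
    nlinarith [sq_abs z, abs_nonneg z, mul_le_mul_of_nonneg_left hzD
      (by linarith : (0:ℝ) ≤ 2*(d:ℝ))]
  have hD0 : D ≠ 0 := by
    have hDr : D = ((1 + (2*(d:ℝ)-1)*z^2 - 2*(d:ℝ)*z*(Dhat k) : ℝ) : ℂ) := by
      rw [hDdef]; push_cast; ring
    rw [hDr]
    exact Complex.ofReal_ne_zero.mpr (ne_of_gt hDpos)
  have hσ : sigC k = 2*(d:ℂ)*((Dhat k : ℝ) : ℂ) := sigC_eq hd1 k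
  have hFeq : F = (1 - (z:ℂ) * c) / D := by
    rw [eq_div_iff hD0, hDdef]
    rw [hcF] at e1
    linear_combination (1 - sigC k * (z:ℂ)) * e0 + e1 + (z:ℂ) * F * hσ
  rw [← hFeq]
  exact hF

end
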